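/- For all nonnegative integers k ≤ n, 2^k·k!·S_B(n,k) = Σ_{ℓ=0}^{k} B_{n,ℓ}·C(n-ℓ, k-ℓ). -/

import Mathlib

open Finset

/-- Type B Stirling numbers of the second kind:
`S_B(n,k) = S_B(n-1,k-1) + (2k+1) S_B(n-1,k)`, `S_B(0,k) = δ_{0k}`. -/
def stirlingB : ℕ → ℕ → ℕ
  | 0, 0 => 1
  | 0, _ + 1 => 0
  | n + 1, 0 => 1 * stirlingB n 0
  | n + 1, k + 1 => stirlingB n k + (2 * (k + 1) + 1) * stirlingB n (k + 1)

/-- A signed permutation of `{1,...,n}`, encoded as an (unsigned) permutation together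
with a sign for each position. -/
abbrev SignedPerm (n : ℕ) := Equiv.Perm (Fin n) × (Fin n → Bool)

/-- The value `π_i ∈ {±1,...,±n}` (1-indexed) of a signed permutation; `π_0 = 0`, and
`π_i = 0` for `i > n`. -/
def spVal {n : ℕ} (π : SignedPerm n) (i : ℕ) : ℤ :=
  if h : 1 ≤ i ∧ i ≤ n then
    (if π.2 ⟨i - 1, by omega⟩ then -(((π.1 ⟨i - 1, by omega⟩ : Fin n) : ℤ) + 1)
     else ((π.1 ⟨i - 1, by omega⟩ : Fin n) : ℤ) + 1)
  else 0

/-- The type B descent set `Des_B(π) = {i ∈ {0,...,n-1} : π_i > π_{i+1}}` (with `π_0 = 0`). -/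
def desSetB {n : ℕ} (π : SignedPerm n) : Finset ℕ :=
  (Finset.range n).filter fun i => spVal π (i + 1) < spVal π i

/-- The type B Eulerian number `B_{n,ℓ}`: the number of signed permutations of `{1,...,n}`
with `ℓ` type B descents. -/
def eulerianB (n ℓ : ℕ) : ℕ :=
  (Finset.univ.filter fun π : SignedPerm n => (desSetB π).card = ℓ).card

-- insertion of the value n (signed by s) at position j
def insPerm {n : ℕ} (σ : Equiv.Perm (Fin n)) (j : Fin (n+1)) : Equiv.Perm (Fin (n+1)) :=
  (finSuccEquiv' j).trans ((Equiv.optionCongr σ).trans (finSuccEquiv' (Fin.last n)).symm)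

@[simp] lemma insPerm_at {n : ℕ} (σ : Equiv.Perm (Fin n)) (j : Fin (n+1)) :
    insPerm σ j j = Fin.last n := by
  simp [insPerm, finSuccEquiv'_at, finSuccEquiv'_symm_none]

@[simp] lemma insPerm_succAbove {n : ℕ} (σ : Equiv.Perm (Fin n)) (j : Fin (n+1)) (i : Fin n) :
    insPerm σ j (j.succAbove i) = (σ i).castSucc := by
  simp [insPerm, finSuccEquiv'_succAbove, finSuccEquiv'_symm_some, Fin.succAbove_last]

def ins {n : ℕ} (π : SignedPerm n) (j : Fin (n+1)) (s : Bool) : SignedPerm (n+1) :=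
  (insPerm π.1 j, fun p => (finSuccEquiv' j p).elim s π.2)

@[simp] lemma ins_sign_at {n : ℕ} (π : SignedPerm n) (j : Fin (n+1)) (s : Bool) :
    (ins π j s).2 j = s := by simp [ins, finSuccEquiv'_at]

@[simp] lemma ins_sign_succAbove {n : ℕ} (π : SignedPerm n) (j : Fin (n+1)) (s : Bool) (i : Fin n) :
    (ins π j s).2 (j.succAbove i) = π.2 i := by simp [ins, finSuccEquiv'_succAbove]

lemma spVal_coe {n : ℕ} (π : SignedPerm n) (i : Fin n) :
    spVal π ((i : ℕ) + 1) = if π.2 i then -((π.1 i : ℤ) + 1) else (π.1 i : ℤ) + 1 := by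
  have h : 1 ≤ (i : ℕ) + 1 ∧ (i : ℕ) + 1 ≤ n := ⟨Nat.le_add_left _ _, i.isLt⟩
  rw [spVal, dif_pos h]
  congr 1 <;> simp

@[simp] lemma spVal_zero {n : ℕ} (π : SignedPerm n) : spVal π 0 = 0 := by simp [spVal]

lemma spVal_bound {n : ℕ} (π : SignedPerm n) (p : ℕ) :
    -(n : ℤ) ≤ spVal π p ∧ spVal π p ≤ n := by
  rw [spVal]
  split_ifs with h h2
  · have := (π.1 ⟨p - 1, by omega⟩).isLt
    have h3 : ((π.1 ⟨p - 1, by omega⟩ : Fin n) : ℤ) < n := by exact_mod_cast this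
    constructor <;> omega
  · have := (π.1 ⟨p - 1, by omega⟩).isLt
    have h3 : ((π.1 ⟨p - 1, by omega⟩ : Fin n) : ℤ) < n := by exact_mod_cast this
    constructor <;> omega
  · constructor <;> simp

@[simp] lemma ins_fst {n : ℕ} (π : SignedPerm n) (j : Fin (n+1)) (s : Bool) :
    (ins π j s).1 = insPerm π.1 j := rfl

lemma spVal_ins_of_le {n : ℕ} (π : SignedPerm n) (j : Fin (n+1)) (s : Bool) {p : ℕ}
    (hp : p ≤ (j : ℕ)) : spVal (ins π j s) p = spVal π p := by
  rcases p with _ | t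
  · simp
  · have hj := j.isLt
    have ht : t < n := by omega
    set i : Fin n := ⟨t, ht⟩ with hi
    have hsa : j.succAbove i = ⟨t, by omega⟩ := by
      rw [Fin.succAbove_of_castSucc_lt]
      · rfl
      · rw [Fin.lt_def]
        simpa using (by omega : t < (j : ℕ))
    calc spVal (ins π j s) (t + 1)
        = spVal (ins π j s) ((j.succAbove i : ℕ) + 1) := by rw [hsa]
      _ = spVal π ((i : ℕ) + 1) := by rw [spVal_coe, spVal_coe]; simp
      _ = spVal π (t + 1) := rfl

lemma spVal_ins_self {n : ℕ} (π : SignedPerm n) (j : Fin (n+1)) (s : Bool) :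
    spVal (ins π j s) ((j : ℕ) + 1) = if s then -((n : ℤ)+1) else (n : ℤ)+1 := by
  rw [show ((j : ℕ) + 1 : ℕ) = ((j : Fin (n+1)) : ℕ) + 1 from rfl, spVal_coe]
  simp

lemma spVal_ins_of_gt {n : ℕ} (π : SignedPerm n) (j : Fin (n+1)) (s : Bool) {t : ℕ}
    (h1 : (j : ℕ) < t) (h2 : t ≤ n) : spVal (ins π j s) (t + 1) = spVal π t := by
  have ht : t - 1 < n := by omega
  set i : Fin n := ⟨t - 1, ht⟩ with hi
  have hsa : j.succAbove i = ⟨t, by omega⟩ := by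
    rw [Fin.succAbove_of_le_castSucc]
    · simp only [Fin.ext_iff, Fin.val_succ, hi]
      omega
    · rw [Fin.le_def]
      simpa using (by omega : (j : ℕ) ≤ t - 1)
  calc spVal (ins π j s) (t + 1)
      = spVal (ins π j s) ((j.succAbove i : ℕ) + 1) := by rw [hsa]
    _ = spVal π ((i : ℕ) + 1) := by rw [spVal_coe, spVal_coe]; simp
    _ = spVal π t := by congr 1; simp [hi]; omega

lemma des_ins_lt {n : ℕ} (π : SignedPerm n) (j : Fin (n+1)) (s : Bool) {i : ℕ}
    (hi : i < (j : ℕ)) :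
    (spVal (ins π j s) (i+1) < spVal (ins π j s) i ↔ spVal π (i+1) < spVal π i) := by
  rw [spVal_ins_of_le π j s (by omega), spVal_ins_of_le π j s (by omega)]

lemma des_ins_at {n : ℕ} (π : SignedPerm n) (j : Fin (n+1)) (s : Bool) :
    (spVal (ins π j s) ((j:ℕ)+1) < spVal (ins π j s) (j:ℕ) ↔ s = true) := by
  rw [spVal_ins_self, spVal_ins_of_le π j s le_rfl]
  obtain ⟨h1, h2⟩ := spVal_bound π (j : ℕ)
  cases s <;> simp <;> omega

lemma des_ins_succ {n : ℕ} (π : SignedPerm n) (j : Fin (n+1)) (s : Bool) (hjn : (j:ℕ) < n) :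
    (spVal (ins π j s) ((j:ℕ)+2) < spVal (ins π j s) ((j:ℕ)+1) ↔ s = false) := by
  rw [show (j:ℕ)+2 = ((j:ℕ)+1)+1 from rfl,
    spVal_ins_of_gt π j s (by omega : (j:ℕ) < (j:ℕ)+1) (by omega), spVal_ins_self]
  obtain ⟨h1, h2⟩ := spVal_bound π ((j : ℕ)+1)
  cases s <;> simp <;> omega

lemma des_ins_shift {n : ℕ} (π : SignedPerm n) (j : Fin (n+1)) (s : Bool) {i : ℕ}
    (h1 : (j:ℕ)+2 ≤ i) (h2 : i ≤ n) :
    (spVal (ins π j s) (i+1) < spVal (ins π j s) i ↔ spVal π i < spVal π (i-1)) := by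
  rw [spVal_ins_of_gt π j s (by omega) h2,
    show (i : ℕ) = (i-1)+1 by omega, spVal_ins_of_gt π j s (by omega) (by omega)]
  have : i - 1 + 1 = i := by omega
  rw [this]

lemma card_desSetB_ins {n : ℕ} (π : SignedPerm n) (j : Fin (n+1)) (s : Bool) :
    (desSetB (ins π j s)).card
      + (if ((j:ℕ) ∈ desSetB π ∨ ((j:ℕ) = n ∧ s = false)) then 1 else 0)
      = (desSetB π).card + 1 := by
  classical
  have hjn : (j:ℕ) ≤ n := by have := j.isLt; omega
  have hcardτ : (desSetB (ins π j s)).card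
      = ∑ i ∈ range (n+1), (if spVal (ins π j s) (i+1) < spVal (ins π j s) i then 1 else 0) := by
    rw [desSetB, card_filter]
  have hcardπ : (desSetB π).card
      = ∑ i ∈ range n, (if spVal π (i+1) < spVal π i then 1 else 0) := by
    rw [desSetB, card_filter]
  have hhead : ∑ i ∈ range (j:ℕ), (if spVal (ins π j s) (i+1) < spVal (ins π j s) i then 1 else 0)
      = ∑ i ∈ range (j:ℕ), (if spVal π (i+1) < spVal π i then 1 else 0) :=
    sum_congr rfl fun i hi => if_congr (des_ins_lt π j s (mem_range.mp hi)) rfl rfl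
  have hsplitτ : ∑ i ∈ range (n+1), (if spVal (ins π j s) (i+1) < spVal (ins π j s) i then 1 else 0)
      = (∑ i ∈ range (j:ℕ), (if spVal (ins π j s) (i+1) < spVal (ins π j s) i then 1 else 0))
        + ∑ i ∈ Ico (j:ℕ) (n+1), (if spVal (ins π j s) (i+1) < spVal (ins π j s) i then 1 else 0) := by
    rw [range_eq_Ico, ← sum_Ico_consecutive _ (Nat.zero_le _) (by omega : (j:ℕ) ≤ n+1),
      ← range_eq_Ico]
  have hbot : ∑ i ∈ Ico (j:ℕ) (n+1), (if spVal (ins π j s) (i+1) < spVal (ins π j s) i then 1 else 0)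
      = (if s = true then 1 else 0)
        + ∑ i ∈ Ico ((j:ℕ)+1) (n+1), (if spVal (ins π j s) (i+1) < spVal (ins π j s) i then 1 else 0) := by
    rw [sum_eq_sum_Ico_succ_bot (by omega : (j:ℕ) < n+1)]
    congr 1
    exact if_congr (des_ins_at π j s) rfl rfl
  by_cases hc : (j:ℕ) = n
  · -- j at the end
    have hempty : Ico ((j:ℕ)+1) (n+1) = (∅ : Finset ℕ) := by rw [hc, Ico_self]
    have hnotmem : ¬ ((j:ℕ) ∈ desSetB π) := by
      intro hmem
      have := mem_range.mp (mem_of_mem_filter _ hmem)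
      omega
    rw [hcardτ, hcardπ, hsplitτ, hbot, hempty, sum_empty, hhead, hc]
    rw [hc] at hnotmem
    cases s <;> simp [hnotmem] <;> omega
  · have hlt : (j:ℕ) < n := by omega
    have hbot2 : ∑ i ∈ Ico ((j:ℕ)+1) (n+1), (if spVal (ins π j s) (i+1) < spVal (ins π j s) i then 1 else 0)
        = (if s = false then 1 else 0)
          + ∑ i ∈ Ico ((j:ℕ)+2) (n+1), (if spVal (ins π j s) (i+1) < spVal (ins π j s) i then 1 else 0) := by
      rw [sum_eq_sum_Ico_succ_bot (by omega : (j:ℕ)+1 < n+1)]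
      congr 1
      exact if_congr (des_ins_succ π j s hlt) rfl rfl
    have hshift : ∑ i ∈ Ico ((j:ℕ)+2) (n+1), (if spVal (ins π j s) (i+1) < spVal (ins π j s) i then 1 else 0)
        = ∑ i ∈ Ico ((j:ℕ)+1) n, (if spVal π (i+1) < spVal π i then 1 else 0) := by
      rw [sum_Ico_eq_sum_range, sum_Ico_eq_sum_range]
      rw [show n + 1 - ((j:ℕ)+2) = n - ((j:ℕ)+1) by omega]
      refine sum_congr rfl fun i hi => ?_
      have hi' := mem_range.mp hi
      have key := des_ins_shift π j s (show (j:ℕ)+2 ≤ (j:ℕ)+2+i by omega)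
        (show (j:ℕ)+2+i ≤ n by omega)
      rw [show (j:ℕ)+2+i-1 = (j:ℕ)+1+i by omega] at key
      rw [if_congr key rfl rfl, show (j:ℕ)+2+i = (j:ℕ)+1+i+1 by omega]
    have hπsplit : ∑ i ∈ range n, (if spVal π (i+1) < spVal π i then 1 else 0)
        = (∑ i ∈ range (j:ℕ), (if spVal π (i+1) < spVal π i then 1 else 0))
          + ((if spVal π ((j:ℕ)+1) < spVal π (j:ℕ) then 1 else 0)
            + ∑ i ∈ Ico ((j:ℕ)+1) n, (if spVal π (i+1) < spVal π i then 1 else 0)) := by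
      rw [range_eq_Ico, ← sum_Ico_consecutive _ (Nat.zero_le _) (le_of_lt hlt), ← range_eq_Ico,
        sum_eq_sum_Ico_succ_bot hlt]
    have hmem : ((j:ℕ) ∈ desSetB π) ↔ spVal π ((j:ℕ)+1) < spVal π (j:ℕ) := by
      simp [desSetB, hlt]
    rw [hcardτ, hcardπ, hsplitτ, hbot, hbot2, hshift, hhead, hπsplit]
    have hcond : (if ((j:ℕ) ∈ desSetB π ∨ ((j:ℕ) = n ∧ s = false)) then 1 else 0)
        = (if spVal π ((j:ℕ)+1) < spVal π (j:ℕ) then (1:ℕ) else 0) := by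
      rw [if_congr (show ((j:ℕ) ∈ desSetB π ∨ ((j:ℕ) = n ∧ s = false)) ↔
        spVal π ((j:ℕ)+1) < spVal π (j:ℕ) by
          rw [hmem]; constructor
          · rintro (h | ⟨h, _⟩); exact h; exact absurd h hc
          · exact Or.inl) rfl rfl]
    rw [hcond]
    cases s <;> simp <;> omega

lemma ins_injective {n : ℕ} :
    Function.Injective (fun x : SignedPerm n × (Fin (n+1) × Bool) => ins x.1 x.2.1 x.2.2) := by
  rintro ⟨π, j, s⟩ ⟨π', j', s'⟩ h
  simp only [Prod.mk.injEq] at h ⊢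
  obtain ⟨h1, h2⟩ := Prod.mk.injEq _ _ _ _ ▸ h
  have hperm : insPerm π.1 j = insPerm π'.1 j' := h1
  have hj : j = j' := by
    have e1 : insPerm π.1 j j = Fin.last n := insPerm_at _ _
    have e2 : insPerm π'.1 j' j' = Fin.last n := insPerm_at _ _
    have e2' : insPerm π.1 j j' = Fin.last n := by rw [hperm]; exact e2
    have : insPerm π.1 j j = insPerm π.1 j j' := by rw [e1, e2']
    exact (insPerm π.1 j).injective this
  subst hj
  have hπ1 : π.1 = π'.1 := by
    apply Equiv.ext
    intro i
    have : insPerm π.1 j (j.succAbove i) = insPerm π'.1 j (j.succAbove i) := by rw [hperm]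
    rw [insPerm_succAbove, insPerm_succAbove] at this
    exact Fin.castSucc_injective _ this
  have hsgn : (ins π j s).2 = (ins π' j s').2 := h2
  have hs : s = s' := by
    have := congrFun hsgn j
    simpa using this
  have hπ2 : π.2 = π'.2 := by
    funext i
    have := congrFun hsgn (j.succAbove i)
    simpa using this
  exact ⟨Prod.ext hπ1 hπ2, rfl, hs⟩

lemma ins_bijective {n : ℕ} :
    Function.Bijective (fun x : SignedPerm n × (Fin (n+1) × Bool) => ins x.1 x.2.1 x.2.2) := by
  rw [Fintype.bijective_iff_injective_and_card]
  refine ⟨ins_injective, ?_⟩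
  simp [Fintype.card_perm, Nat.factorial_succ]
  ring

lemma desSetB_subset {n : ℕ} (π : SignedPerm n) : desSetB π ⊆ range n := filter_subset _ _

lemma card_desSetB_le {n : ℕ} (π : SignedPerm n) : (desSetB π).card ≤ n := by
  have := card_le_card (desSetB_subset π)
  simpa using this

lemma count_cond {n : ℕ} (π : SignedPerm n) :
    (∑ js : Fin (n+1) × Bool,
      if ((js.1:ℕ) ∈ desSetB π ∨ ((js.1:ℕ) = n ∧ js.2 = false)) then 1 else 0)
      = 2 * (desSetB π).card + 1 := by
  classical
  rw [Fintype.sum_prod_type]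
  have hD : desSetB π ⊆ range n := desSetB_subset π
  have step : ∀ j : Fin (n+1),
      (∑ s : Bool, if ((j:ℕ) ∈ desSetB π ∨ ((j:ℕ) = n ∧ s = false)) then 1 else 0)
        = (if (j:ℕ) ∈ desSetB π then 1 else 0) + ((if (j:ℕ) ∈ desSetB π then 1 else 0)
          + (if (j:ℕ) = n then 1 else 0)) := by
    intro j
    rw [Fintype.sum_bool]
    have hne : (j:ℕ) ∈ desSetB π → (j:ℕ) ≠ n := fun h => by
      have := mem_range.mp (hD h); omega
    by_cases h1 : (j:ℕ) ∈ desSetB π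
    · simp [h1, hne h1]
    · by_cases h2 : (j:ℕ) = n <;> simp [h1, h2] <;>
        (intro hmem; have := mem_range.mp (hD hmem); omega)
  rw [Finset.sum_congr rfl fun j _ => step j]
  rw [sum_add_distrib, sum_add_distrib]
  have hcnt : (∑ j : Fin (n+1), if (j:ℕ) ∈ desSetB π then 1 else 0) = (desSetB π).card := by
    rw [Fin.sum_univ_eq_sum_range (fun i => if i ∈ desSetB π then 1 else 0) (n+1)]
    rw [← card_filter]
    congr 1
    ext i
    simp only [mem_filter, mem_range]
    exact ⟨fun h => h.2, fun h => ⟨by have := mem_range.mp (hD h); omega, h⟩⟩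
  have hlast : (∑ j : Fin (n+1), if (j:ℕ) = n then 1 else 0) = 1 := by
    rw [Fin.sum_univ_eq_sum_range (fun i => if i = n then 1 else 0) (n+1)]
    rw [Finset.sum_ite_eq' (range (n+1)) n (fun _ => 1)]
    simp
  rw [hcnt, hlast]
  ring

lemma fiber_sum {n : ℕ} (π : SignedPerm n) (m : ℕ) :
    (∑ js : Fin (n+1) × Bool, if (desSetB (ins π js.1 js.2)).card = m then 1 else 0)
      = (if (desSetB π).card = m then 2*m+1 else 0)
        + (if (desSetB π).card + 1 = m then 2*(n+1) - (2*(desSetB π).card+1) else 0) := by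
  classical
  have hcard : ∀ (j : Fin (n+1)) (s : Bool), (desSetB (ins π j s)).card
      = (desSetB π).card + 1
        - (if ((j:ℕ) ∈ desSetB π ∨ ((j:ℕ) = n ∧ s = false)) then 1 else 0) := by
    intro j s
    have := card_desSetB_ins π j s
    split_ifs at this ⊢ <;> omega
  have hpoint : ∀ js : Fin (n+1) × Bool,
      ((if ((js.1:ℕ) ∈ desSetB π ∨ ((js.1:ℕ) = n ∧ js.2 = false)) then (1:ℕ) else 0)
       + (if ((js.1:ℕ) ∈ desSetB π ∨ ((js.1:ℕ) = n ∧ js.2 = false)) then 0 else 1)) = 1 := by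
    intro js; split_ifs <;> rfl
  have htot : (∑ js : Fin (n+1) × Bool,
      (if ((js.1:ℕ) ∈ desSetB π ∨ ((js.1:ℕ) = n ∧ js.2 = false)) then (1:ℕ) else 0))
      + (∑ js : Fin (n+1) × Bool,
      (if ((js.1:ℕ) ∈ desSetB π ∨ ((js.1:ℕ) = n ∧ js.2 = false)) then (0:ℕ) else 1))
      = 2*(n+1) := by
    rw [← sum_add_distrib, Finset.sum_congr rfl fun js _ => hpoint js]
    simp [card_univ]
    ring
  have hN := count_cond π
  by_cases hm1 : (desSetB π).card = m
  · have hstep : ∀ js : Fin (n+1) × Bool,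
        (if (desSetB (ins π js.1 js.2)).card = m then (1:ℕ) else 0)
          = (if ((js.1:ℕ) ∈ desSetB π ∨ ((js.1:ℕ) = n ∧ js.2 = false)) then 1 else 0) := by
      intro js
      rw [hcard js.1 js.2]
      split_ifs <;> omega
    rw [Finset.sum_congr rfl fun js _ => hstep js, hN, if_pos hm1,
      if_neg (by omega : ¬ ((desSetB π).card + 1 = m))]
    omega
  · by_cases hm2 : (desSetB π).card + 1 = m
    · have hstep : ∀ js : Fin (n+1) × Bool,
          (if (desSetB (ins π js.1 js.2)).card = m then (1:ℕ) else 0)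
            = (if ((js.1:ℕ) ∈ desSetB π ∨ ((js.1:ℕ) = n ∧ js.2 = false)) then 0 else 1) := by
        intro js
        rw [hcard js.1 js.2]
        split_ifs <;> omega
      rw [Finset.sum_congr rfl fun js _ => hstep js, if_neg hm1, if_pos hm2]
      omega
    · have hstep : ∀ js : Fin (n+1) × Bool,
          (if (desSetB (ins π js.1 js.2)).card = m then (1:ℕ) else 0) = 0 := by
        intro js
        rw [hcard js.1 js.2]
        split_ifs <;> omega
      rw [Finset.sum_congr rfl fun js _ => hstep js, if_neg hm1, if_neg hm2]
      simp

lemma eulerianB_succ_eq (n m : ℕ) :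
    eulerianB (n+1) m
      = (2*m+1) * eulerianB n m
        + ∑ π : SignedPerm n,
            (if (desSetB π).card + 1 = m then 2*(n+1) - (2*(desSetB π).card+1) else 0) := by
  classical
  have h1 : eulerianB (n+1) m
      = ∑ x : SignedPerm (n+1), (if (desSetB x).card = m then 1 else 0) := by
    rw [eulerianB, card_filter]
  have h2 : (∑ x : SignedPerm (n+1), (if (desSetB x).card = m then (1:ℕ) else 0))
      = ∑ y : SignedPerm n × (Fin (n+1) × Bool),
          (if (desSetB (ins y.1 y.2.1 y.2.2)).card = m then 1 else 0) :=
    (Fintype.sum_bijective _ ins_bijective _ _ (fun y => rfl)).symm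
  rw [h1, h2, Fintype.sum_prod_type]
  rw [Finset.sum_congr rfl fun π _ => fiber_sum π m, sum_add_distrib]
  congr 1
  have : ∀ π : SignedPerm n, (if (desSetB π).card = m then 2*m+1 else 0)
      = (2*m+1) * (if (desSetB π).card = m then 1 else 0) := by
    intro π; split_ifs <;> ring
  rw [Finset.sum_congr rfl fun π _ => this π, ← mul_sum, ← card_filter]
  rfl

lemma eulerianB_succ_zero (n : ℕ) : eulerianB (n+1) 0 = eulerianB n 0 := by
  rw [eulerianB_succ_eq]
  have : ∀ π : SignedPerm n,
      (if (desSetB π).card + 1 = 0 then 2*(n+1) - (2*(desSetB π).card+1) else 0) = 0 := by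
    intro π; rw [if_neg (by omega)]
  rw [Finset.sum_congr rfl fun π _ => this π]
  simp

lemma eulerianB_succ (n m : ℕ) (hm : m ≤ n) :
    eulerianB (n+1) (m+1)
      = (2*(m+1)+1) * eulerianB n (m+1) + (2*(n-m)+1) * eulerianB n m := by
  rw [eulerianB_succ_eq]
  congr 1
  have : ∀ π : SignedPerm n,
      (if (desSetB π).card + 1 = m + 1 then 2*(n+1) - (2*(desSetB π).card+1) else 0)
        = (2*(n-m)+1) * (if (desSetB π).card = m then 1 else 0) := by
    intro π
    by_cases h : (desSetB π).card = m
    · rw [if_pos (by omega), if_pos h, h]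
      omega
    · rw [if_neg (by omega), if_neg h]
      ring
  rw [Finset.sum_congr rfl fun π _ => this π, ← mul_sum, ← card_filter]
  rfl

lemma eulerianB_zero_zero : eulerianB 0 0 = 1 := by
  rw [eulerianB]
  have : ∀ π : SignedPerm 0, (desSetB π).card = 0 := fun π => by simp [desSetB]
  rw [filter_true_of_mem fun π _ => this π, card_univ]
  simp

lemma eulerianB_zero (n : ℕ) : eulerianB n 0 = 1 := by
  induction n with
  | zero => exact eulerianB_zero_zero
  | succ n ih => rw [eulerianB_succ_zero, ih]

lemma sum_eulerianB (n : ℕ) :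
    ∑ ℓ ∈ range (n+1), eulerianB n ℓ = 2^n * n.factorial := by
  have h := card_eq_sum_card_fiberwise
    (f := fun π : SignedPerm n => (desSetB π).card) (s := univ) (t := range (n+1))
    (fun π _ => by simp only [Finset.coe_range, Set.mem_Iio, Finset.mem_coe, mem_range]; have := card_desSetB_le π; omega)
  rw [card_univ] at h
  have hcard : Fintype.card (SignedPerm n) = 2^n * n.factorial := by
    simp [Fintype.card_perm]
    ring
  rw [hcard] at h
  simpa [eulerianB] using h.symm

lemma stirlingB_zero (n : ℕ) : stirlingB n 0 = 1 := by
  induction n with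
  | zero => rfl
  | succ n ih => rw [stirlingB, ih]

lemma stirlingB_eq_zero {n k : ℕ} (h : n < k) : stirlingB n k = 0 := by
  induction n generalizing k with
  | zero => obtain ⟨k', rfl⟩ := Nat.exists_eq_add_of_lt h |>.imp fun _ h => h; rfl
  | succ n ih =>
    obtain ⟨k', rfl⟩ : ∃ k', k = k' + 1 := ⟨k - 1, by omega⟩
    rw [stirlingB, ih (by omega), ih (by omega)]
    ring

lemma stirlingB_self (n : ℕ) : stirlingB n n = 1 := by
  induction n with
  | zero => rfl
  | succ n ih => rw [stirlingB, ih, stirlingB_eq_zero (by omega)]; ring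

lemma term_identity {n K m : ℕ} (hm : m ≤ K) (hK : K + 1 ≤ n) :
    (2*m+1) * Nat.choose (n+1-m) (K+1-m) + (2*(n-m)+1) * Nat.choose (n-m) (K-m)
      = 2*(K+1) * Nat.choose (n-m) (K-m) + (2*K+3) * Nat.choose (n-m) (K+1-m) := by
  have h1 : n+1-m = (n-m)+1 := by omega
  have h2 : K+1-m = (K-m)+1 := by omega
  have hab := Nat.choose_succ_right_eq (n-m) (K-m)
  have h3 : n-m-(K-m) = n-K := by omega
  rw [h3] at hab
  rw [h1, h2, Nat.choose_succ_succ]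
  set x := Nat.choose (n-m) (K-m) with hx
  set y := Nat.choose (n-m) ((K-m)+1) with hy
  zify [hm, hK, show m ≤ n by omega, show K ≤ n by omega] at hab ⊢
  linear_combination (-2 : ℤ) * hab

lemma key_sum (n K : ℕ) (hK : K + 1 ≤ n) (A : ℕ → ℕ) (hA0 : A 0 = 1) :
    Nat.choose (n+1) (K+1)
      + (∑ i ∈ range (K+1),
          ((2*(i+1)+1) * A (i+1) + (2*(n-i)+1) * A i) * Nat.choose (n-i) (K-i))
    = 2*(K+1) * (∑ ℓ ∈ range (K+1), A ℓ * Nat.choose (n-ℓ) (K-ℓ))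
      + (2*K+3) * (∑ ℓ ∈ range (K+2), A ℓ * Nat.choose (n-ℓ) (K+1-ℓ)) := by
  have hsplit : ∀ i ∈ range (K+1),
      ((2*(i+1)+1) * A (i+1) + (2*(n-i)+1) * A i) * Nat.choose (n-i) (K-i)
        = (2*(i+1)+1) * A (i+1) * Nat.choose (n-i) (K-i)
          + (2*(n-i)+1) * A i * Nat.choose (n-i) (K-i) := fun i _ => add_mul _ _ _
  rw [sum_congr rfl hsplit, sum_add_distrib]
  have hT0 : Nat.choose (n+1) (K+1)
      + (∑ i ∈ range (K+1), (2*(i+1)+1) * A (i+1) * Nat.choose (n-i) (K-i))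
      = ∑ m ∈ range (K+2), (2*m+1) * A m * Nat.choose (n+1-m) (K+1-m) := by
    rw [Finset.sum_range_succ' (fun m => (2*m+1) * A m * Nat.choose (n+1-m) (K+1-m)) (K+1)]
    simp only [Nat.add_sub_add_right]
    rw [hA0]
    simp only [Nat.mul_zero, Nat.zero_add, Nat.mul_one, Nat.one_mul, Nat.sub_zero]
    ring
  rw [← add_assoc, hT0]
  -- peel the top term of the sum over range (K+2) on both sides
  rw [Finset.sum_range_succ (fun m => (2*m+1) * A m * Nat.choose (n+1-m) (K+1-m)) (K+1),
    Finset.sum_range_succ (fun ℓ => A ℓ * Nat.choose (n-ℓ) (K+1-ℓ)) (K+1)]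
  have e1 : Nat.choose (n+1-(K+1)) (K+1-(K+1)) = 1 := by
    rw [Nat.sub_self, Nat.choose_zero_right]
  have e2 : Nat.choose (n-(K+1)) (K+1-(K+1)) = 1 := by
    rw [Nat.sub_self, Nat.choose_zero_right]
  simp only [e1, e2, Nat.mul_one]
  -- termwise identity on range (K+1)
  have hterm : ∑ m ∈ range (K+1), ((2*m+1) * A m * Nat.choose (n+1-m) (K+1-m)
        + (2*(n-m)+1) * A m * Nat.choose (n-m) (K-m))
      = ∑ m ∈ range (K+1), (2*(K+1) * (A m * Nat.choose (n-m) (K-m))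
        + (2*K+3) * (A m * Nat.choose (n-m) (K+1-m))) := by
    refine sum_congr rfl fun m hm => ?_
    have hm' : m ≤ K := by have := mem_range.mp hm; omega
    have tid := term_identity hm' hK
    have hL : (2*m+1) * A m * Nat.choose (n+1-m) (K+1-m)
        + (2*(n-m)+1) * A m * Nat.choose (n-m) (K-m)
        = A m * ((2*m+1) * Nat.choose (n+1-m) (K+1-m)
          + (2*(n-m)+1) * Nat.choose (n-m) (K-m)) := by ring
    rw [hL, tid]
    ring
  rw [sum_add_distrib] at hterm
  rw [sum_add_distrib] at hterm
  rw [← mul_sum, ← mul_sum] at hterm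
  rw [Nat.mul_add]
  ring_nf
  ring_nf at hterm
  linarith

theorem stmt2 (n k : ℕ) (h : k ≤ n) :
    2 ^ k * Nat.factorial k * stirlingB n k =
      ∑ ℓ ∈ Finset.range (k + 1), eulerianB n ℓ * Nat.choose (n - ℓ) (k - ℓ) := by
  induction n generalizing k with
  | zero =>
    obtain rfl : k = 0 := Nat.le_zero.mp h
    simp [stirlingB, eulerianB_zero_zero]
  | succ n ih =>
    by_cases hk : k = n + 1
    · subst hk
      have hR : ∑ ℓ ∈ range (n+1+1), eulerianB (n+1) ℓ * Nat.choose (n+1-ℓ) (n+1-ℓ)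
          = ∑ ℓ ∈ range (n+2), eulerianB (n+1) ℓ :=
        sum_congr rfl fun ℓ _ => by rw [Nat.choose_self, mul_one]
      rw [stirlingB_self, mul_one, hR, sum_eulerianB]
    · have hk' : k ≤ n := by omega
      rcases k with _ | K
      · simp [stirlingB_zero, eulerianB_zero]
      · have hK1 : K + 1 ≤ n := hk'
        have IH1 := ih K (by omega)
        have IH2 := ih (K+1) hK1
        have hs : stirlingB (n+1) (K+1) = stirlingB n K + (2*(K+1)+1) * stirlingB n (K+1) := rfl
        have hRHS : ∑ ℓ ∈ range (K+1+1), eulerianB (n+1) ℓ * Nat.choose (n+1-ℓ) (K+1-ℓ)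
            = Nat.choose (n+1) (K+1)
              + ∑ i ∈ range (K+1), ((2*(i+1)+1) * eulerianB n (i+1)
                  + (2*(n-i)+1) * eulerianB n i) * Nat.choose (n-i) (K-i) := by
          rw [Finset.sum_range_succ' (fun ℓ => eulerianB (n+1) ℓ * Nat.choose (n+1-ℓ) (K+1-ℓ)) (K+1)]
          simp only [Nat.add_sub_add_right, Nat.sub_zero]
          rw [eulerianB_zero, one_mul]
          rw [add_comm]
          congr 1
          refine sum_congr rfl fun i hi => ?_
          have hi' : i ≤ n := by have := mem_range.mp hi; omega
          rw [eulerianB_succ n i hi', add_mul]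
        rw [hRHS, key_sum n K hK1 (eulerianB n) (eulerianB_zero n), ← IH1, ← IH2, hs]
        rw [Nat.factorial_succ]
        ring
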